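/- If constants P^{γαβ} satisfy the null condition, then for Φ = (1, -x₁/t, -x₂/t) on the cone K = {t ≥ |x| + 1} one has |P^{γαβ} Φ_γ Φ_α Φ_β| ≤ C·s²/t², where s² = t² - |x|² and C depends only on the P^{γαβ}. -/
import Mathlib


/-- The null condition for constants `P^{γαβ}` in two space dimensions. -/
def NullCond (P : Fin 3 → Fin 3 → Fin 3 → ℝ) : Prop :=
  ∀ ξ : Fin 3 → ℝ, ξ 0 ^ 2 = ξ 1 ^ 2 + ξ 2 ^ 2 →
    ∑ γ : Fin 3, ∑ α : Fin 3, ∑ β : Fin 3, P γ α β * ξ γ * ξ α * ξ β = 0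

lemma triple_diff (a a' b b' c c' : ℝ) (ha : |a| ≤ 1) (ha' : |a'| ≤ 1)
    (hb : |b| ≤ 1) (hb' : |b'| ≤ 1) (hc : |c| ≤ 1) (hc' : |c'| ≤ 1) :
    |a * b * c - a' * b' * c'| ≤ |a - a'| + |b - b'| + |c - c'| := by
  have h : a * b * c - a' * b' * c'
      = (a - a') * (b * c) + a' * ((b - b') * c) + (a' * b') * (c - c') := by ring
  calc |a * b * c - a' * b' * c'|
      ≤ |(a - a') * (b * c)| + |a' * ((b - b') * c)| + |(a' * b') * (c - c')| := by
        rw [h]; exact abs_add_three _ _ _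
    _ ≤ |a - a'| + |b - b'| + |c - c'| := by
        simp only [abs_mul]
        have hbc : |b| * |c| ≤ 1 := mul_le_one₀ hb (abs_nonneg c) hc
        have e1 : |a - a'| * (|b| * |c|) ≤ |a - a'| * 1 :=
          mul_le_mul_of_nonneg_left hbc (abs_nonneg _)
        have e2 : |a'| * (|b - b'| * |c|) ≤ 1 * (|b - b'| * 1) := by
          apply mul_le_mul ha' (mul_le_mul_of_nonneg_left hc (abs_nonneg _))
            (by positivity) (by norm_num)
        have e3 : |a'| * |b'| * |c - c'| ≤ 1 * |c - c'| := by
          apply mul_le_mul_of_nonneg_right (mul_le_one₀ ha' (abs_nonneg _) hb') (abs_nonneg _)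
        linarith

set_option maxHeartbeats 1000000 in
/-- if `P` is null, then on the cone `K = {t ≥ |x|+1}`, with
`Φ = (1, -x₁/t, -x₂/t)` and `s² = t² - |x|²`, one has
`|P^{γαβ} Φ_γ Φ_α Φ_β| ≤ C s²/t²`. -/
theorem stmt3 (P : Fin 3 → Fin 3 → Fin 3 → ℝ) (hP : NullCond P) :
    ∃ C > (0 : ℝ), ∀ t x1 x2 : ℝ, Real.sqrt (x1 ^ 2 + x2 ^ 2) + 1 ≤ t →
      |∑ γ : Fin 3, ∑ α : Fin 3, ∑ β : Fin 3,
          P γ α β * (![1, -x1 / t, -x2 / t] γ)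
            * (![1, -x1 / t, -x2 / t] α) * (![1, -x1 / t, -x2 / t] β)|
        ≤ C * ((t ^ 2 - x1 ^ 2 - x2 ^ 2) / t ^ 2) := by
  classical
  set Q : ℝ := ∑ γ : Fin 3, ∑ α : Fin 3, ∑ β : Fin 3, |P γ α β| with hQdef
  have hQ : 0 ≤ Q := by
    apply Finset.sum_nonneg; intro γ _
    apply Finset.sum_nonneg; intro α _
    apply Finset.sum_nonneg; intro β _
    exact abs_nonneg _
  refine ⟨3 * Q + 1, by positivity, ?_⟩
  intro t x1 x2 ht
  have hr0 : 0 ≤ Real.sqrt (x1 ^ 2 + x2 ^ 2) := Real.sqrt_nonneg _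
  set r : ℝ := Real.sqrt (x1 ^ 2 + x2 ^ 2) with hrdef
  have ht0 : (0 : ℝ) < t := by linarith
  have hr2 : r ^ 2 = x1 ^ 2 + x2 ^ 2 := Real.sq_sqrt (by positivity)
  set u : ℝ := r / t with hudef
  have hu0 : 0 ≤ u := div_nonneg hr0 ht0.le
  have hu1 : u ≤ 1 := by rw [hudef, div_le_one ht0]; linarith
  have hx1r : |x1| ≤ r := by
    rw [← Real.sqrt_sq_eq_abs]; exact Real.sqrt_le_sqrt (by nlinarith)
  have hx2r : |x2| ≤ r := by
    rw [← Real.sqrt_sq_eq_abs]; exact Real.sqrt_le_sqrt (by nlinarith)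
  have hv1 : |(-x1) / t| ≤ 1 := by
    rw [abs_div, abs_neg, abs_of_pos ht0, div_le_one ht0]; linarith
  have hv2 : |(-x2) / t| ≤ 1 := by
    rw [abs_div, abs_neg, abs_of_pos ht0, div_le_one ht0]; linarith
  set Φ : Fin 3 → ℝ := ![1, -x1 / t, -x2 / t] with hΦdef
  set ξ : Fin 3 → ℝ := ![u, -x1 / t, -x2 / t] with hξdef
  have hξnull : ξ 0 ^ 2 = ξ 1 ^ 2 + ξ 2 ^ 2 := by
    show u ^ 2 = (-x1 / t) ^ 2 + (-x2 / t) ^ 2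
    rw [hudef]
    field_simp
    nlinarith [hr2]
  have h0 := hP ξ hξnull
  have hΦb : ∀ i, |Φ i| ≤ 1 := by
    intro i
    fin_cases i
    · show |(1 : ℝ)| ≤ 1; simp
    · exact hv1
    · exact hv2
  have hξb : ∀ i, |ξ i| ≤ 1 := by
    intro i
    fin_cases i
    · show |u| ≤ 1; rw [abs_of_nonneg hu0]; exact hu1
    · exact hv1
    · exact hv2
  have hdiff : ∀ i, |Φ i - ξ i| ≤ 1 - u := by
    intro i
    fin_cases i
    · show |(1 : ℝ) - u| ≤ 1 - u; rw [abs_of_nonneg (by linarith)]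
    · show |(-x1 / t) - (-x1 / t)| ≤ 1 - u; simp; linarith
    · show |(-x2 / t) - (-x2 / t)| ≤ 1 - u; simp; linarith
  have key : ∀ γ α β : Fin 3, |Φ γ * Φ α * Φ β - ξ γ * ξ α * ξ β| ≤ 3 * (1 - u) := by
    intro γ α β
    have h := triple_diff (Φ γ) (ξ γ) (Φ α) (ξ α) (Φ β) (ξ β)
      (hΦb γ) (hξb γ) (hΦb α) (hξb α) (hΦb β) (hξb β)
    have h1 := hdiff γ; have h2 := hdiff α; have h3 := hdiff β
    linarith
  have heq : (∑ γ : Fin 3, ∑ α : Fin 3, ∑ β : Fin 3,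
        P γ α β * Φ γ * Φ α * Φ β)
      = ∑ γ : Fin 3, ∑ α : Fin 3, ∑ β : Fin 3,
        P γ α β * (Φ γ * Φ α * Φ β - ξ γ * ξ α * ξ β) := by
    have h1 : ∀ γ α β : Fin 3, P γ α β * (Φ γ * Φ α * Φ β - ξ γ * ξ α * ξ β)
        = P γ α β * Φ γ * Φ α * Φ β - P γ α β * ξ γ * ξ α * ξ β := by
      intros; ring
    simp only [h1, Finset.sum_sub_distrib, h0, sub_zero]
  have hsq0 : 0 ≤ (t ^ 2 - x1 ^ 2 - x2 ^ 2) / t ^ 2 := by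
    apply div_nonneg _ (by positivity)
    nlinarith [hr2]
  have h1u : 1 - u ≤ (t ^ 2 - x1 ^ 2 - x2 ^ 2) / t ^ 2 := by
    rw [hudef, le_div_iff₀ (by positivity : (0 : ℝ) < t ^ 2)]
    have hc : r / t * t = r := div_mul_cancel₀ r ht0.ne'
    nlinarith [hr2, hc]
  calc |∑ γ : Fin 3, ∑ α : Fin 3, ∑ β : Fin 3, P γ α β * Φ γ * Φ α * Φ β|
      = |∑ γ : Fin 3, ∑ α : Fin 3, ∑ β : Fin 3,
          P γ α β * (Φ γ * Φ α * Φ β - ξ γ * ξ α * ξ β)| := by rw [heq]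
    _ ≤ ∑ γ : Fin 3, ∑ α : Fin 3, ∑ β : Fin 3,
          |P γ α β * (Φ γ * Φ α * Φ β - ξ γ * ξ α * ξ β)| := by
        refine (Finset.abs_sum_le_sum_abs _ _).trans (Finset.sum_le_sum fun γ _ => ?_)
        refine (Finset.abs_sum_le_sum_abs _ _).trans (Finset.sum_le_sum fun α _ => ?_)
        exact Finset.abs_sum_le_sum_abs _ _
    _ ≤ ∑ γ : Fin 3, ∑ α : Fin 3, ∑ β : Fin 3, |P γ α β| * (3 * (1 - u)) := by
        refine Finset.sum_le_sum fun γ _ => Finset.sum_le_sum fun α _ =>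
          Finset.sum_le_sum fun β _ => ?_
        rw [abs_mul]
        exact mul_le_mul_of_nonneg_left (key γ α β) (abs_nonneg _)
    _ = Q * (3 * (1 - u)) := by
        rw [hQdef]; simp only [← Finset.sum_mul]
    _ = 3 * Q * (1 - u) := by ring
    _ ≤ 3 * Q * ((t ^ 2 - x1 ^ 2 - x2 ^ 2) / t ^ 2) :=
        mul_le_mul_of_nonneg_left h1u (by positivity)
    _ ≤ (3 * Q + 1) * ((t ^ 2 - x1 ^ 2 - x2 ^ 2) / t ^ 2) :=
        mul_le_mul_of_nonneg_right (by linarith) hsq0
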